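/- Let α ∈ (0,1/2) be irrational and suppose w² ∈ L(α) with w nonempty and primitive. Then |w| = q₀, |w| = q₁, or |w| = q_{k,ℓ} for some k ≥ 2 with 0 < ℓ ≤ a_k, where q_{k,ℓ} are the denominators of convergents and semiconvergents of α. -/

import Mathlib

open Classical in
/-- The Sturmian word of slope `α` and intercept `x`: the `n`-th letter codes
whether the point `{x + nα}` lies in `I₁ = [1−α, 1)` (letter `true` = 1) or in
`I₀ = [0, 1−α)` (letter `false` = 0). -/
noncomputable def sturmian (α x : ℝ) (n : ℕ) : Bool :=
  if 1 - α ≤ Int.fract (x + n * α) then true else false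

open Classical in
/-- The Sturmian word of slope `α` and intercept `x` with the other convention:
`I₀ = (0, 1−α]` coded by `false` and `I₁ = (1−α, 1]` (i.e. `(1−α,1) ∪ {0}`) by `true`. -/
noncomputable def sturmian' (α x : ℝ) (n : ℕ) : Bool :=
  if Int.fract (x + n * α) = 0 ∨ 1 - α < Int.fract (x + n * α) then true else false

/-- `w` is a prefix of the infinite word `s`. -/
def IsPref (w : List Bool) (s : ℕ → Bool) : Prop :=
  ∀ i, i < w.length → w.getD i false = s i

/-- `w` belongs to the language `L(α)` of factors of Sturmian words of slope `α`. -/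
def inLang (α : ℝ) (w : List Bool) : Prop :=
  ∃ x ∈ Set.Ico (0 : ℝ) 1, ∃ k : ℕ, ∀ i < w.length, w.getD i false = sturmian α x (k + i)

/-- The map `ψ(x) = (x + 1 − α)/2` on the circle `[0,1)`, with `ψ(0) = (1−α)/2`. -/
noncomputable def psi (α x : ℝ) : ℝ := if x = 0 then (1 - α) / 2 else (x + 1 - α) / 2


/-- The Gauss-map iterates of `α`: `cfX α 0 = α`, `cfX α (n+1) = 1/{cfX α n}`. -/
noncomputable def cfX (α : ℝ) : ℕ → ℝ
  | 0 => α
  | n + 1 => (Int.fract (cfX α n))⁻¹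

/-- The partial quotients of the continued fraction expansion of `α`. -/
noncomputable def cfA (α : ℝ) (n : ℕ) : ℤ := ⌊cfX α n⌋

/-- The denominators of the convergents of `α`: `q₀ = 1`, `q₁ = a₁`,
`q_k = a_k q_{k-1} + q_{k-2}`. -/
noncomputable def cfQ (α : ℝ) : ℕ → ℤ
  | 0 => 1
  | 1 => cfA α 1
  | n + 2 => cfA α (n + 2) * cfQ α (n + 1) + cfQ α n

/-- `‖x‖ = min({x}, 1 - {x})`, the distance from `x` to the nearest integer. -/
noncomputable def dni (x : ℝ) : ℝ := min (Int.fract x) (1 - Int.fract x)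


/-- A word is primitive if it is a power `zⁿ` only for `n = 1`. -/
def Primitive (w : List Bool) : Prop :=
  ∀ (z : List Bool) (n : ℕ), w = List.flatten (List.replicate n z) → n = 1










/-- numerators -/
noncomputable def pP (α : ℝ) : ℕ → ℤ
  | 0 => 0
  | 1 => 1
  | n + 2 => cfA α (n + 2) * pP α (n + 1) + pP α n

noncomputable def eta (α : ℝ) (k : ℕ) : ℝ := (-1)^k * ((cfQ α k) * α - pP α k)

lemma irr_inv {x : ℝ} (h : Irrational x) : Irrational x⁻¹ := by
  rintro ⟨q, hq⟩
  rcases eq_or_ne q 0 with h0 | h0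
  · subst h0
    simp only [Rat.cast_zero] at hq
    have : x = 0 := by
      have := hq.symm
      rwa [inv_eq_zero] at this
    exact h ⟨0, by simp [this]⟩
  · apply h
    refine ⟨q⁻¹, ?_⟩
    rw [Rat.cast_inv, hq, inv_inv]

lemma irr_fract {x : ℝ} (h : Irrational x) : Irrational (Int.fract x) := by
  have : Int.fract x = x - (⌊x⌋ : ℝ) := rfl
  rw [this]
  exact h.sub_intCast _

lemma cfX_irr {α : ℝ} (hα : Irrational α) : ∀ k, Irrational (cfX α k) := by
  intro k
  induction k with
  | zero => exact hα
  | succ n ih => exact irr_inv (irr_fract ih)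

lemma fract_cfX_pos {α : ℝ} (hα : Irrational α) (k : ℕ) :
    0 < Int.fract (cfX α k) ∧ Int.fract (cfX α k) < 1 := by
  refine ⟨?_, Int.fract_lt_one _⟩
  rcases lt_or_eq_of_le (Int.fract_nonneg (cfX α k)) with h | h
  · exact h
  · exfalso
    exact (irr_fract (cfX_irr hα k)) ⟨0, by simp [← h]⟩

lemma cfX_gt_one {α : ℝ} (hα : Irrational α) (k : ℕ) : 1 < cfX α (k + 1) := by
  have h := fract_cfX_pos hα k
  have : cfX α (k+1) = (Int.fract (cfX α k))⁻¹ := rfl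
  rw [this]
  exact one_lt_inv_iff₀.mpr ⟨h.1, h.2⟩

lemma cfA_ge_one {α : ℝ} (hα : Irrational α) (k : ℕ) : 1 ≤ cfA α (k + 1) := by
  have := cfX_gt_one hα k
  have : (1:ℝ) ≤ cfX α (k+1) := le_of_lt this
  exact Int.le_floor.mpr (by exact_mod_cast this)

noncomputable def etam (α : ℝ) : ℕ → ℝ
  | 0 => 1
  | (k+1) => eta α k

lemma eta_zero (α : ℝ) : eta α 0 = α := by simp [eta, cfQ, pP]

lemma eta_succ_eq (α : ℝ) (k : ℕ) :
    eta α (k+1) = etam α k - (cfA α (k+1) : ℝ) * eta α k := by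
  cases k with
  | zero => simp [eta, etam, cfQ, pP]
  | succ j =>
      show eta α (j+2) = eta α j - (cfA α (j+2) : ℝ) * eta α (j+1)
      simp only [eta, cfQ, pP]
      push_cast
      ring

lemma eta_inv {α : ℝ} (hα : Irrational α) (h0 : 0 < α) (h1 : α < 1) :
    ∀ k, 0 < eta α k ∧ cfX α (k+1) * eta α k = etam α k := by
  intro k
  induction k with
  | zero =>
      constructor
      · rw [eta_zero]; exact h0
      · have hfr : Int.fract α = α := Int.fract_eq_self.2 ⟨le_of_lt h0, h1⟩
        have hc : cfX α 1 = (Int.fract (cfX α 0))⁻¹ := rfl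
        have hc0 : cfX α 0 = α := rfl
        rw [eta_zero]
        rw [hc, hc0, hfr]
        rw [inv_mul_cancel₀ (ne_of_gt h0)]
        rfl
  | succ j ih =>
      have hf := fract_cfX_pos hα (j+1)
      have hstep : eta α (j+1) = eta α j * Int.fract (cfX α (j+1)) := by
        rw [eta_succ_eq, ← ih.2]
        have hfd : Int.fract (cfX α (j+1)) = cfX α (j+1) - (cfA α (j+1) : ℝ) := rfl
        rw [hfd]; ring
      constructor
      · rw [hstep]; exact mul_pos ih.1 hf.1
      · have hc : cfX α (j+2) = (Int.fract (cfX α (j+1)))⁻¹ := rfl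
        rw [hc, hstep]
        show (Int.fract (cfX α (j+1)))⁻¹ * (eta α j * Int.fract (cfX α (j+1))) = eta α j
        field_simp
        exact mul_div_cancel_left₀ _ (ne_of_gt hf.1)

lemma eta_pos {α : ℝ} (hα : Irrational α) (h0 : 0 < α) (h1 : α < 1) (k : ℕ) :
    0 < eta α k := (eta_inv hα h0 h1 k).1

lemma eta_succ_lt {α : ℝ} (hα : Irrational α) (h0 : 0 < α) (h1 : α < 1) (k : ℕ) :
    eta α (k+1) < eta α k := by
  have hf := fract_cfX_pos hα (k+1)
  have hstep : eta α (k+1) = eta α k * Int.fract (cfX α (k+1)) := by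
    rw [eta_succ_eq, ← (eta_inv hα h0 h1 k).2]
    have hfd : Int.fract (cfX α (k+1)) = cfX α (k+1) - (cfA α (k+1) : ℝ) := rfl
    rw [hfd]; ring
  rw [hstep]
  nlinarith [eta_pos hα h0 h1 k, hf.1, hf.2]

lemma eta_lt_alpha {α : ℝ} (hα : Irrational α) (h0 : 0 < α) (h1 : α < 1) (k : ℕ) :
    eta α (k+1) < α := by
  induction k with
  | zero => have := eta_succ_lt hα h0 h1 0; rwa [eta_zero] at this
  | succ j ih => exact lt_trans (eta_succ_lt hα h0 h1 (j+1)) ih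

lemma eta_recur (α : ℝ) (k : ℕ) :
    eta α (k+2) = eta α k - (cfA α (k+2) : ℝ) * eta α (k+1) := eta_succ_eq α (k+1)

lemma eta_decay {α : ℝ} (hα : Irrational α) (h0 : 0 < α) (h1 : α < 1) (k : ℕ) :
    2 * eta α (k+2) < eta α k := by
  have hr := eta_recur α k
  have ha := cfA_ge_one hα (k+1)
  have ha' : (1:ℝ) ≤ (cfA α (k+2) : ℝ) := by exact_mod_cast ha
  have hp := eta_pos hα h0 h1 (k+1)
  have hlt := eta_succ_lt hα h0 h1 (k+1)
  nlinarith

lemma eta_small {α : ℝ} (hα : Irrational α) (h0 : 0 < α) (h1 : α < 1) :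
    ∀ ε : ℝ, 0 < ε → ∃ k, eta α k < ε := by
  have hpow : ∀ j, eta α (2*j) ≤ α / 2^j := by
    intro j
    induction j with
    | zero => simp [eta_zero]
    | succ i ih =>
        have hd := eta_decay hα h0 h1 (2*i)
        have h2i : 2*(i+1) = 2*i + 2 := by ring
        rw [h2i]
        have : (2:ℝ)^(i+1) = 2^i * 2 := by ring
        rw [this]
        rw [div_mul_eq_div_div]
        linarith
  intro ε hε
  obtain ⟨j, hj⟩ := pow_unbounded_of_one_lt (α / ε) (by norm_num : (1:ℝ) < 2)
  refine ⟨2*j, lt_of_le_of_lt (hpow j) ?_⟩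
  rw [div_lt_iff₀ (by positivity)]
  rw [div_lt_iff₀ hε] at hj
  linarith

lemma det_eq (α : ℝ) : ∀ k, pP α (k+1) * cfQ α k - pP α k * cfQ α (k+1) = (-1)^k := by
  intro k
  induction k with
  | zero => simp [pP, cfQ]
  | succ j ih =>
      show pP α (j+2) * cfQ α (j+1) - pP α (j+1) * cfQ α (j+2) = (-1)^(j+1)
      have hp : pP α (j+2) = cfA α (j+2) * pP α (j+1) + pP α j := rfl
      have hq : cfQ α (j+2) = cfA α (j+2) * cfQ α (j+1) + cfQ α j := rfl
      rw [hp, hq]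
      have hpow : (-1:ℤ)^(j+1) = -(-1)^j := by ring
      rw [hpow, ← ih]; ring

lemma cfQ_pos {α : ℝ} (hα : Irrational α) : ∀ k, 1 ≤ cfQ α k := by
  intro k
  induction k using Nat.strong_induction_on with
  | _ k ih =>
    match k with
    | 0 => simp [cfQ]
    | 1 =>
        show 1 ≤ cfQ α 1
        have := cfA_ge_one hα 0
        simpa [cfQ] using this
    | (k+2) =>
        have h1 := ih (k+1) (by omega)
        have h2 := ih k (by omega)
        have h3 := cfA_ge_one hα (k+1)
        show 1 ≤ cfA α (k+2) * cfQ α (k+1) + cfQ α k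
        nlinarith

lemma e_eq (α : ℝ) (k : ℕ) :
    (cfQ α k : ℝ) * α - (pP α k : ℝ) = (-1:ℝ)^k * eta α k := by
  have h : ((-1:ℝ)^k) * ((-1:ℝ)^k) = 1 := by
    rw [← pow_add, ← two_mul, pow_mul]; norm_num
  unfold eta
  linear_combination (-((cfQ α k : ℝ) * α - (pP α k : ℝ))) * h

lemma neg_one_pow_cases (k : ℕ) : ((-1:ℝ)^k = 1) ∨ ((-1:ℝ)^k = -1) := by
  rcases Nat.even_or_odd k with h | h
  · left; exact h.neg_one_pow
  · right; exact h.neg_one_pow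

lemma irr_lin {α : ℝ} (hα : Irrational α) (A B : ℤ) (hA : A ≠ 0) : (A:ℝ) * α ≠ (B:ℝ) := by
  intro h
  apply hα
  refine ⟨(B:ℚ)/(A:ℚ), ?_⟩
  have hA' : (A:ℝ) ≠ 0 := Int.cast_ne_zero.mpr hA
  push_cast
  rw [div_eq_iff hA']
  linear_combination -h

lemma fract_pos_of_nat {α : ℝ} (hα : Irrational α) (m : ℕ) (hm : 1 ≤ m) :
    0 < Int.fract ((m:ℝ)*α) := by
  rcases lt_or_eq_of_le (Int.fract_nonneg ((m:ℝ)*α)) with h | h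
  · exact h
  · exfalso
    have hx : (m:ℝ)*α = (⌊(m:ℝ)*α⌋ : ℝ) := by
      have h' := h.symm
      unfold Int.fract at h'
      linarith
    refine irr_lin hα (m:ℤ) ⌊(m:ℝ)*α⌋ (by positivity) ?_
    push_cast
    exact hx

lemma fract_add_eq (y z : ℝ) :
    Int.fract (y + z) =
      if Int.fract y + Int.fract z < 1 then Int.fract y + Int.fract z
      else Int.fract y + Int.fract z - 1 := by
  have h1 : y + z = (Int.fract y + Int.fract z) + ((⌊y⌋ + ⌊z⌋ : ℤ) : ℝ) := by
    unfold Int.fract; push_cast; ring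
  rw [h1, Int.fract_add_intCast]
  have h0y := Int.fract_nonneg y; have h0z := Int.fract_nonneg z
  have h1y := Int.fract_lt_one y; have h1z := Int.fract_lt_one z
  split_ifs with h
  · exact Int.fract_eq_self.2 ⟨by linarith, h⟩
  · have h2 : Int.fract (Int.fract y + Int.fract z) =
        Int.fract (Int.fract y + Int.fract z - ((1:ℤ):ℝ)) := (Int.fract_sub_intCast _ 1).symm
    rw [h2]
    push_cast
    exact Int.fract_eq_self.2 ⟨by linarith, by linarith⟩

lemma letter_flip_pos {α : ℝ} (h2 : α < 1/2) (y z : ℝ)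
    (hr0 : 0 < Int.fract z) (hrα : Int.fract z < α) :
    ((1 - α ≤ Int.fract (y+z)) ↔ (1 - α ≤ Int.fract y)) ↔
      (Int.fract y < 1 - α - Int.fract z ∨
        (1 - α ≤ Int.fract y ∧ Int.fract y < 1 - Int.fract z)) := by
  have ht0 := Int.fract_nonneg y
  have ht1 := Int.fract_lt_one y
  rw [fract_add_eq]
  split_ifs with h
  · constructor
    · intro hiff
      by_contra hc
      push_neg at hc
      obtain ⟨hc1, hc2⟩ := hc
      rcases lt_or_ge (Int.fract y) (1-α) with h3 | h3
      · have h4 : 1 - α ≤ Int.fract y + Int.fract z := by linarith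
        have := hiff.1 h4; linarith
      · have h4 := hc2 h3; linarith
    · intro hc
      rcases hc with hc | ⟨hc1, hc2⟩
      · constructor <;> intro <;> linarith
      · constructor <;> intro <;> linarith
  · push_neg at h
    constructor
    · intro hiff
      exfalso
      have h3 : 1 - α ≤ Int.fract y := by linarith
      have := hiff.2 h3
      linarith
    · intro hc
      exfalso
      rcases hc with hc | ⟨hc1, hc2⟩ <;> linarith

lemma letter_flip_neg {α : ℝ} (h0 : 0 < α) (h2 : α < 1/2) (y z : ℝ)
    (hr1 : 1 - α < Int.fract z) :
    ((1 - α ≤ Int.fract (y+z)) ↔ (1 - α ≤ Int.fract y)) ↔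
      (((1 - Int.fract z) ≤ Int.fract y ∧ Int.fract y < 1 - α) ∨
        (1 - α + (1 - Int.fract z) ≤ Int.fract y)) := by
  have ht0 := Int.fract_nonneg y
  have ht1 := Int.fract_lt_one y
  have hr2 := Int.fract_lt_one z
  rw [fract_add_eq]
  split_ifs with h
  · constructor
    · intro hiff
      exfalso
      have h3 : 1 - α ≤ Int.fract y + Int.fract z := by linarith
      have := hiff.1 h3
      linarith
    · intro hc
      exfalso
      rcases hc with ⟨hc1, hc2⟩ | hc1 <;> linarith
  · push_neg at h
    constructor
    · intro hiff
      rcases lt_or_ge (Int.fract y) (1-α) with h3 | h3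
      · left; exact ⟨by linarith, h3⟩
      · right
        have := hiff.2 h3
        linarith
    · intro hc
      constructor
      · intro hL'
        rcases hc with ⟨hc1, hc2⟩ | hc1 <;> linarith
      · intro hL
        rcases hc with ⟨hc1, hc2⟩ | hc1
        · linarith
        · linarith

lemma letter_flip_mid {α : ℝ} (y z : ℝ) (hr1 : α ≤ Int.fract z) (hr2 : Int.fract z ≤ 1-α)
    (hy : 1-α ≤ Int.fract y) : Int.fract (y+z) < 1-α := by
  have ht1 := Int.fract_lt_one y
  rw [fract_add_eq]
  split_ifs with h
  · linarith
  · linarith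

lemma shift_pos {α : ℝ} (h0 : 0 < α) (h2 : α < 1/2) (y : ℝ) (r : ℝ)
    (hr0 : 0 < r) (hrα : r < α) :
    (1 - r ≤ Int.fract (y + α)) ↔ (1-α-r ≤ Int.fract y ∧ Int.fract y < 1-α) := by
  have ht0 := Int.fract_nonneg y
  have ht1 := Int.fract_lt_one y
  have hfα : Int.fract α = α := Int.fract_eq_self.2 ⟨h0.le, by linarith⟩
  rw [fract_add_eq, hfα]
  split_ifs with h
  · constructor
    · intro hh; exact ⟨by linarith, by linarith⟩
    · rintro ⟨h1', h2'⟩; linarith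
  · push_neg at h
    constructor
    · intro hh; exfalso; linarith
    · rintro ⟨h1', h2'⟩; exfalso; linarith

lemma shift_neg {α : ℝ} (h0 : 0 < α) (h2 : α < 1/2) (y : ℝ) (δ : ℝ)
    (hδ0 : 0 < δ) (hδα : δ < α) :
    (Int.fract (y + α) < δ) ↔ (1-α ≤ Int.fract y ∧ Int.fract y < 1-α+δ) := by
  have ht0 := Int.fract_nonneg y
  have ht1 := Int.fract_lt_one y
  have hfα : Int.fract α = α := Int.fract_eq_self.2 ⟨h0.le, by linarith⟩
  rw [fract_add_eq, hfα]
  split_ifs with h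
  · constructor
    · intro hh; exfalso; linarith
    · rintro ⟨h1', h2'⟩; exfalso; linarith
  · push_neg at h
    constructor
    · intro hh; exact ⟨by linarith, by linarith⟩
    · rintro ⟨h1', h2'⟩; linarith

lemma lemB {α : ℝ} (hα : Irrational α) (h0 : 0 < α) (h2 : α < 1/2) (n : ℕ) (hn : 1 ≤ n)
    (hside : Int.fract ((n:ℝ)*α) < α ∨ 1 - α < Int.fract ((n:ℝ)*α))
    (hbest : ∀ m : ℕ, 1 ≤ m → m < n →
      (Int.fract ((n:ℝ)*α) < α → Int.fract ((m:ℝ)*α) < α →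
          Int.fract ((n:ℝ)*α) < Int.fract ((m:ℝ)*α)) ∧
      (1 - α < Int.fract ((n:ℝ)*α) → 1 - α < Int.fract ((m:ℝ)*α) →
          Int.fract ((m:ℝ)*α) < Int.fract ((n:ℝ)*α))) :
    (n : ℤ) = cfQ α 0 ∨ (n:ℤ) = cfQ α 1 ∨
      ∃ (k : ℕ) (ℓ : ℤ), 2 ≤ k ∧ 0 < ℓ ∧ ℓ ≤ cfA α k ∧
        (n:ℤ) = ℓ * cfQ α (k - 1) + cfQ α (k - 2) := by
  have h1 : α < 1 := by linarith
  have hn1 : (1:ℤ) ≤ (n:ℤ) := by exact_mod_cast hn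
  obtain ⟨P, s, hs, ε, hε0, hεα, hE⟩ :
      ∃ (P : ℤ) (s : ℝ), (s = 1 ∨ s = -1) ∧ ∃ ε : ℝ, 0 < ε ∧ ε < α ∧ (n:ℝ)*α - (P:ℝ) = s*ε := by
    rcases hside with hp | hm
    · refine ⟨⌊(n:ℝ)*α⌋, 1, Or.inl rfl, Int.fract ((n:ℝ)*α),
        fract_pos_of_nat hα n hn, hp, ?_⟩
      unfold Int.fract; ring
    · refine ⟨⌊(n:ℝ)*α⌋ + 1, -1, Or.inr rfl, 1 - Int.fract ((n:ℝ)*α),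
        by linarith [Int.fract_lt_one ((n:ℝ)*α)], by linarith, ?_⟩
      unfold Int.fract
      push_cast
      ring
  have contra : ∀ (m : ℕ) (Q : ℤ) (δ : ℝ), 1 ≤ m → m < n → 0 < δ → δ < ε → δ < α →
      (m:ℝ)*α - (Q:ℝ) = s*δ → False := by
    intro m Q δ hm1 hm2 hδ0 hδε hδα hQ
    have hbm := hbest m hm1 hm2
    rcases hs with hs1 | hs1 <;> subst hs1
    · have hfm : Int.fract ((m:ℝ)*α) = δ := by
        have hq : (m:ℝ)*α = δ + (Q:ℝ) := by linarith
        rw [hq, Int.fract_add_intCast]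
        exact Int.fract_eq_self.2 ⟨hδ0.le, by linarith⟩
      have hfn : Int.fract ((n:ℝ)*α) = ε := by
        have hq : (n:ℝ)*α = ε + (P:ℝ) := by linarith
        rw [hq, Int.fract_add_intCast]
        exact Int.fract_eq_self.2 ⟨hε0.le, by linarith⟩
      have := hbm.1 (by rw [hfn]; exact hεα) (by rw [hfm]; exact hδα)
      rw [hfn, hfm] at this
      linarith
    · have hfm : Int.fract ((m:ℝ)*α) = 1 - δ := by
        have hq : (m:ℝ)*α = (1 - δ) + ((Q - 1:ℤ):ℝ) := by push_cast; linarith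
        rw [hq, Int.fract_add_intCast]
        exact Int.fract_eq_self.2 ⟨by linarith, by linarith⟩
      have hfn : Int.fract ((n:ℝ)*α) = 1 - ε := by
        have hq : (n:ℝ)*α = (1 - ε) + ((P - 1:ℤ):ℝ) := by push_cast; linarith
        rw [hq, Int.fract_add_intCast]
        exact Int.fract_eq_self.2 ⟨by linarith, by linarith⟩
      have := hbm.2 (by rw [hfn]; linarith) (by rw [hfm]; linarith)
      rw [hfn, hfm] at this
      linarith
  have hexists : ∃ k, eta α k ≤ ε := by
    obtain ⟨k, hk⟩ := eta_small hα h0 h1 ε hε0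
    exact ⟨k, hk.le⟩
  classical
  have hk0 : eta α (Nat.find hexists) ≤ ε := Nat.find_spec hexists
  have hk0pos : Nat.find hexists ≠ 0 := by
    intro h
    rw [h, eta_zero] at hk0
    linarith
  obtain ⟨K, hK⟩ : ∃ K, Nat.find hexists = K + 1 := ⟨Nat.find hexists - 1, by omega⟩
  have hl : eta α (K+1) ≤ ε := by rw [← hK]; exact hk0
  have hu : ε < eta α K := by
    by_contra hcon
    push_neg at hcon
    exact (Nat.find_min hexists (show K < Nat.find hexists by omega)) hcon
  obtain ⟨x, y, hxq, hxp⟩ :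
      ∃ x y : ℤ, x * cfQ α (K+1) + y * cfQ α K = (n:ℤ) ∧ x * pP α (K+1) + y * pP α K = P := by
    have hdet := det_eq α K
    have hsq2 : ((-1:ℤ)^K) * ((-1:ℤ)^K) = 1 := by
      rw [← pow_add, ← two_mul, pow_mul]; norm_num
    refine ⟨(-1)^K * (P * cfQ α K - (n:ℤ) * pP α K),
            (-1)^K * ((n:ℤ) * pP α (K+1) - P * cfQ α (K+1)), ?_, ?_⟩
    · linear_combination ((-1:ℤ)^K * (n:ℤ)) * hdet + (n:ℤ) * hsq2
    · linear_combination ((-1:ℤ)^K * P) * hdet + P * hsq2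
  have hcast1 : (x:ℝ) * (cfQ α (K+1) : ℝ) + (y:ℝ) * (cfQ α K : ℝ) = (n:ℝ) := by
    exact_mod_cast congrArg (Int.cast : ℤ → ℝ) hxq
  have hcast2 : (x:ℝ) * (pP α (K+1) : ℝ) + (y:ℝ) * (pP α K : ℝ) = (P:ℝ) := by
    exact_mod_cast congrArg (Int.cast : ℤ → ℝ) hxp
  have heK := e_eq α K
  have heK1 := e_eq α (K+1)
  have hE3 : (-1:ℝ)^K * ((y:ℝ) * eta α K - (x:ℝ) * eta α (K+1)) = s * ε := by
    have expand : (x:ℝ) * ((cfQ α (K+1):ℝ) * α - (pP α (K+1):ℝ))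
        + (y:ℝ) * ((cfQ α K:ℝ) * α - (pP α K:ℝ)) = s * ε := by
      linear_combination α * hcast1 - hcast2 + hE
    rw [heK, heK1] at expand
    linear_combination expand
  have hval : (y:ℝ)*eta α K - (x:ℝ)*eta α (K+1) = ε ∨
      (y:ℝ)*eta α K - (x:ℝ)*eta α (K+1) = -ε := by
    rcases neg_one_pow_cases K with hσ | hσ <;> rw [hσ] at hE3 <;>
      rcases hs with hs1 | hs1 <;> rw [hs1] at hE3
    · left; linarith
    · right; linarith
    · right; linarith
    · left; linarith
  have hq1 : (1:ℤ) ≤ cfQ α K := cfQ_pos hα K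
  have hq2 : (1:ℤ) ≤ cfQ α (K+1) := cfQ_pos hα (K+1)
  have hq1r : (1:ℝ) ≤ (cfQ α K : ℝ) := by exact_mod_cast hq1
  have hq2r : (1:ℝ) ≤ (cfQ α (K+1) : ℝ) := by exact_mod_cast hq2
  have hη0 : 0 < eta α K := eta_pos hα h0 h1 K
  have hη1 : 0 < eta α (K+1) := eta_pos hα h0 h1 (K+1)
  have hη2 : 0 < eta α (K+2) := eta_pos hα h0 h1 (K+2)
  have hη21 : eta α (K+2) < eta α (K+1) := eta_succ_lt hα h0 h1 (K+1)
  have hη1α : eta α (K+1) < α := eta_lt_alpha hα h0 h1 K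
  have hη2α : eta α (K+2) < α := by linarith
  rcases lt_trichotomy y 0 with hy | hy | hy
  · -- y < 0
    have h1y : y ≤ -1 := by omega
    have h1yr : (y:ℝ) ≤ -1 := by exact_mod_cast h1y
    rcases lt_trichotomy x 0 with hx | hx | hx
    · exfalso
      have h1x : x ≤ -1 := by omega
      have hA := mul_le_mul_of_nonneg_right h1x (by linarith : (0:ℤ) ≤ cfQ α (K+1))
      have hB := mul_le_mul_of_nonneg_right h1y (by linarith : (0:ℤ) ≤ cfQ α K)
      linarith
    · exfalso
      subst hx
      simp only [zero_mul, zero_add] at hxq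
      have hB := mul_le_mul_of_nonneg_right h1y (by linarith : (0:ℤ) ≤ cfQ α K)
      linarith
    · exfalso
      have h1x : 1 ≤ x := by omega
      have h1xr : (1:ℝ) ≤ (x:ℝ) := by exact_mod_cast h1x
      have hA := mul_le_mul_of_nonneg_right h1yr hη0.le
      have hB := mul_le_mul_of_nonneg_right h1xr hη1.le
      rcases hval with hv | hv <;> linarith
  · -- y = 0
    subst hy
    simp only [Int.cast_zero, zero_mul, zero_add, add_zero] at hcast1 hcast2 hval hxq hxp
    have hx1 : 1 ≤ x := by
      by_contra hxc
      push_neg at hxc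
      have hxc' : x ≤ 0 := by omega
      have : x * cfQ α (K+1) ≤ 0 :=
        mul_nonpos_iff.mpr (Or.inr ⟨hxc', by linarith⟩)
      linarith
    have hx1r : (1:ℝ) ≤ (x:ℝ) := by exact_mod_cast hx1
    have hxη : 0 < (x:ℝ) * eta α (K+1) := mul_pos (by linarith) hη1
    have hv : (x:ℝ) * eta α (K+1) = ε := by
      rcases hval with hv | hv
      · exfalso; linarith
      · linarith
    have hsσ : s = -(-1:ℝ)^K := by
      have h5 : ((-(-1:ℝ)^K) - s) * ε = 0 := by
        linear_combination hE3 + (-1:ℝ)^K * hv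
      rcases mul_eq_zero.mp h5 with h6 | h6
      · linarith [sub_eq_zero.mp h6]
      · exact absurd h6 (ne_of_gt hε0)
    rcases (by omega : x = 1 ∨ 2 ≤ x) with hx2 | hx2
    · -- n = q_{K+1}
      subst hx2
      simp only [one_mul] at hxq
      cases K with
      | zero => exact Or.inr (Or.inl hxq.symm)
      | succ J =>
          refine Or.inr (Or.inr ⟨J+2, cfA α (J+2), by omega, ?_, le_refl _, ?_⟩)
          · exact lt_of_lt_of_le zero_lt_one (cfA_ge_one hα (J+1))
          · show (n:ℤ) = cfA α (J+2) * cfQ α (J+1) + cfQ α J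
            rw [← hxq]; rfl
    · -- x ≥ 2 : contradiction via m = q_{K+1}
      exfalso
      have hmZ : (((cfQ α (K+1)).toNat : ℤ)) = cfQ α (K+1) := Int.toNat_of_nonneg (by linarith)
      have hm1 : 1 ≤ (cfQ α (K+1)).toNat := by omega
      have hx2' : (2:ℤ) ≤ x := hx2
      have hm2 : (cfQ α (K+1)).toNat < n := by
        have h2q := mul_le_mul_of_nonneg_right hx2' (by linarith : (0:ℤ) ≤ cfQ α (K+1))
        have : cfQ α (K+1) < (n:ℤ) := by linarith
        omega
      refine contra (cfQ α (K+1)).toNat (pP α (K+1)) (eta α (K+1)) hm1 hm2 hη1 ?_ hη1α ?_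
      · have hx2r : (2:ℝ) ≤ (x:ℝ) := by exact_mod_cast hx2'
        have := mul_le_mul_of_nonneg_right hx2r hη1.le
        linarith
      · have hcm : (((cfQ α (K+1)).toNat : ℕ) : ℝ) = (cfQ α (K+1) : ℝ) := by
          exact_mod_cast congrArg (Int.cast : ℤ → ℝ) hmZ
        rw [hcm, heK1, hsσ]
        ring
  · -- y > 0
    have hy1 : 1 ≤ y := by omega
    have hy1r : (1:ℝ) ≤ (y:ℝ) := by exact_mod_cast hy1
    rcases lt_trichotomy x 0 with hx | hx | hx
    · exfalso
      have h1x : x ≤ -1 := by omega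
      have h1xr : (x:ℝ) ≤ -1 := by exact_mod_cast h1x
      have hA := mul_le_mul_of_nonneg_right hy1r hη0.le
      have hB := mul_le_mul_of_nonneg_right h1xr hη1.le
      rcases hval with hv | hv <;> linarith
    · exfalso
      subst hx
      simp only [Int.cast_zero, zero_mul, sub_zero, zero_add] at hval
      have hA := mul_le_mul_of_nonneg_right hy1r hη0.le
      rcases hval with hv | hv <;> linarith
    · -- x > 0, y > 0
      have hx1 : 1 ≤ x := by omega
      have hx1r : (1:ℝ) ≤ (x:ℝ) := by exact_mod_cast hx1
      rcases hval with hv | hv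
      · -- value = ε, s = (-1)^K
        have hsσ : s = (-1:ℝ)^K := by
          have h5 : (((-1:ℝ)^K) - s) * ε = 0 := by
            linear_combination hE3 - (-1:ℝ)^K * hv
          rcases mul_eq_zero.mp h5 with h6 | h6
          · linarith [sub_eq_zero.mp h6]
          · exact absurd h6 (ne_of_gt hε0)
        have hrec := eta_recur α K
        rcases (by omega : y = 1 ∨ 2 ≤ y) with hy2 | hy2
        · -- n = x q_{K+1} + q_K : semiconvergent
          subst hy2
          simp only [Int.cast_one, one_mul] at hv hxq
          have hxle : x ≤ cfA α (K+2) := by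
            by_contra hcc
            push_neg at hcc
            have hcc' : cfA α (K+2) + 1 ≤ x := by omega
            have hccr : (cfA α (K+2) : ℝ) + 1 ≤ (x:ℝ) := by exact_mod_cast hcc'
            have hmul : ((cfA α (K+2):ℝ) + 1) * eta α (K+1) ≤ (x:ℝ) * eta α (K+1) :=
              mul_le_mul_of_nonneg_right hccr hη1.le
            have hexp : ((cfA α (K+2):ℝ) + 1) * eta α (K+1)
                = (cfA α (K+2):ℝ) * eta α (K+1) + eta α (K+1) := by ring
            linarith
          refine Or.inr (Or.inr ⟨K+2, x, by omega, hx, hxle, ?_⟩)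
          show (n:ℤ) = x * cfQ α (K+1) + cfQ α K
          linarith
        · -- y ≥ 2 : contradiction via m = q_{K+2}
          exfalso
          have hy2r : (2:ℝ) ≤ (y:ℝ) := by exact_mod_cast hy2
          have hax : cfA α (K+2) < x := by
            have hyK : (2:ℝ) * eta α K ≤ (y:ℝ) * eta α K :=
              mul_le_mul_of_nonneg_right hy2r hη0.le
            have haux : (cfA α (K+2):ℝ) * eta α (K+1) < (x:ℝ) * eta α (K+1) := by
              linarith
            have := lt_of_mul_lt_mul_right haux hη1.le
            exact_mod_cast this
          have hax' : cfA α (K+2) + 1 ≤ x := by omega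
          have hmZ : (((cfQ α (K+2)).toNat : ℤ)) = cfQ α (K+2) := by
            have := cfQ_pos hα (K+2)
            exact Int.toNat_of_nonneg (by linarith)
          have hq3 := cfQ_pos hα (K+2)
          have hqrec : cfQ α (K+2) = cfA α (K+2) * cfQ α (K+1) + cfQ α K := rfl
          have hm1 : 1 ≤ (cfQ α (K+2)).toNat := by omega
          have hm2 : (cfQ α (K+2)).toNat < n := by
            have hlt : cfQ α (K+2) < (n:ℤ) := by
              rw [hqrec, ← hxq]
              have hA := mul_le_mul_of_nonneg_right hax' (by linarith : (0:ℤ) ≤ cfQ α (K+1))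
              have hB := mul_le_mul_of_nonneg_right (show (2:ℤ) ≤ y from hy2)
                (by linarith : (0:ℤ) ≤ cfQ α K)
              linarith
            omega
          refine contra (cfQ α (K+2)).toNat (pP α (K+2)) (eta α (K+2)) hm1 hm2 hη2 ?_ hη2α ?_
          · linarith
          · have hcm : (((cfQ α (K+2)).toNat : ℕ) : ℝ) = (cfQ α (K+2) : ℝ) := by
              exact_mod_cast congrArg (Int.cast : ℤ → ℝ) hmZ
            rw [hcm, e_eq α (K+2), hsσ]
            ring
      · -- value = -ε, s = -(-1)^K : contradiction via m = q_{K+1}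
        exfalso
        have hsσ : s = -(-1:ℝ)^K := by
          have h5 : ((-(-1:ℝ)^K) - s) * ε = 0 := by
            linear_combination hE3 - (-1:ℝ)^K * hv
          rcases mul_eq_zero.mp h5 with h6 | h6
          · linarith [sub_eq_zero.mp h6]
          · exact absurd h6 (ne_of_gt hε0)
        have hqsigned : (cfQ α (K+1):ℝ)*α - (pP α (K+1):ℝ) = s * eta α (K+1) := by
          rw [heK1, hsσ]; ring
        have hstrict : eta α (K+1) ≠ ε := by
          intro heq
          have hdiff : (((n:ℤ) - cfQ α (K+1) : ℤ):ℝ)*α = (((P - pP α (K+1)):ℤ):ℝ) := by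
            push_cast
            have hE' : (n:ℝ)*α - (P:ℝ) = s * eta α (K+1) := by rw [hE, heq]
            linarith [hqsigned, hE']
          refine irr_lin hα ((n:ℤ) - cfQ α (K+1)) (P - pP α (K+1)) ?_ hdiff
          have hA := mul_le_mul_of_nonneg_right hx1 (by linarith : (0:ℤ) ≤ cfQ α (K+1))
          have hB := mul_le_mul_of_nonneg_right hy1 (by linarith : (0:ℤ) ≤ cfQ α K)
          have : cfQ α (K+1) < (n:ℤ) := by linarith
          omega
        have hδε : eta α (K+1) < ε := lt_of_le_of_ne hl hstrict
        have hmZ : (((cfQ α (K+1)).toNat : ℤ)) = cfQ α (K+1) := Int.toNat_of_nonneg (by linarith)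
        have hm1 : 1 ≤ (cfQ α (K+1)).toNat := by omega
        have hm2 : (cfQ α (K+1)).toNat < n := by
          have hA := mul_le_mul_of_nonneg_right hx1 (by linarith : (0:ℤ) ≤ cfQ α (K+1))
          have hB := mul_le_mul_of_nonneg_right hy1 (by linarith : (0:ℤ) ≤ cfQ α K)
          have : cfQ α (K+1) < (n:ℤ) := by linarith
          omega
        refine contra (cfQ α (K+1)).toNat (pP α (K+1)) (eta α (K+1)) hm1 hm2 hη1 hδε hη1α ?_
        have hcm : (((cfQ α (K+1)).toNat : ℕ) : ℝ) = (cfQ α (K+1) : ℝ) := by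
          exact_mod_cast congrArg (Int.cast : ℤ → ℝ) hmZ
        rw [hcm, heK1, hsσ]
        ring

lemma lemA {α : ℝ} (hα : Irrational α) (h0 : 0 < α) (h2 : α < 1/2) (n : ℕ) (hn : 2 ≤ n)
    (θ : ℝ) (u : ℕ → Bool)
    (hcode : ∀ j : ℕ, j < 2*n → (u j = true ↔ 1 - α ≤ Int.fract (θ + (j:ℝ)*α)))
    (hper : ∀ i : ℕ, i < n → u (n+i) = u i)
    (hnoret : ∀ m : ℕ, 1 ≤ m → m < n →
      ∃ i : ℕ, i < n ∧
        ¬((1-α ≤ Int.fract (θ + ((m+i:ℕ):ℝ)*α)) ↔ (1-α ≤ Int.fract (θ + (i:ℝ)*α)))) :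
    (Int.fract ((n:ℝ)*α) < α ∨ 1 - α < Int.fract ((n:ℝ)*α)) ∧
    (∀ m : ℕ, 1 ≤ m → m < n →
      (Int.fract ((n:ℝ)*α) < α → Int.fract ((m:ℝ)*α) < α →
          Int.fract ((n:ℝ)*α) < Int.fract ((m:ℝ)*α)) ∧
      (1 - α < Int.fract ((n:ℝ)*α) → 1 - α < Int.fract ((m:ℝ)*α) →
          Int.fract ((m:ℝ)*α) < Int.fract ((n:ℝ)*α))) := by
  have hsame : ∀ i : ℕ, i < n →
      ((1-α ≤ Int.fract ((θ + (i:ℝ)*α) + (n:ℝ)*α)) ↔ (1-α ≤ Int.fract (θ + (i:ℝ)*α))) := by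
    intro i hi
    have h1 := hcode (n+i) (by omega)
    have h2' := hcode i (by omega)
    have h3 := hper i hi
    rw [show (θ + (i:ℝ)*α) + (n:ℝ)*α = θ + ((n+i:ℕ):ℝ)*α from by push_cast; ring]
    rw [← h1, ← h2', h3]
  have hfn0 : 0 < Int.fract ((n:ℝ)*α) := fract_pos_of_nat hα n (by omega)
  have hexT : ∃ i, i < n ∧ 1 - α ≤ Int.fract (θ + (i:ℝ)*α) := by
    by_contra hcon
    push_neg at hcon
    have hall : ∀ j, j < 2*n → Int.fract (θ + (j:ℝ)*α) < 1 - α := by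
      intro j hj
      rcases lt_or_ge j n with hlt | hge
      · exact hcon j hlt
      · obtain ⟨i, rfl⟩ : ∃ i, j = n + i := ⟨j - n, by omega⟩
        have hi : i < n := by omega
        rw [show θ + ((n+i:ℕ):ℝ)*α = (θ + (i:ℝ)*α) + (n:ℝ)*α from by push_cast; ring]
        by_contra hge'
        push_neg at hge'
        exact absurd ((hsame i hi).mp hge') (not_le.mpr (hcon i hi))
    obtain ⟨i, hi, hne⟩ := hnoret 1 le_rfl (by omega)
    apply hne
    have hA := hall (1+i) (by omega)
    have hB := hall i (by omega)
    constructor <;> intro h <;> linarith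
  have hside : Int.fract ((n:ℝ)*α) < α ∨ 1 - α < Int.fract ((n:ℝ)*α) := by
    by_contra hcon
    push_neg at hcon
    obtain ⟨i, hi, hletter⟩ := hexT
    have hmid := letter_flip_mid (θ + (i:ℝ)*α) ((n:ℝ)*α) hcon.1 hcon.2 hletter
    have := (hsame i hi).mpr hletter
    linarith
  set B : ℝ := θ - α with hB
  have havoidp : Int.fract ((n:ℝ)*α) < α → ∀ j : ℕ, j ≤ n →
      (1 - α - Int.fract ((n:ℝ)*α) ≤ Int.fract (B + (j:ℝ)*α) ∧
        Int.fract (B + (j:ℝ)*α) < 1 - α) → False := by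
    intro hr j hj hmem
    cases j with
    | zero =>
        have hmem0 : 1 - α - Int.fract ((n:ℝ)*α) ≤ Int.fract B ∧ Int.fract B < 1 - α := by
          simpa using hmem
        have hshift := (shift_pos h0 h2 B (Int.fract ((n:ℝ)*α)) hfn0 hr).mpr hmem0
        rw [show B + α = θ + (0:ℝ)*α from by rw [hB]; ring] at hshift
        have hsame0 := hsame 0 (by omega)
        have hflip := (letter_flip_pos h2 (θ + ((0:ℕ):ℝ)*α) ((n:ℝ)*α) hfn0 hr).mp (by
          simpa using hsame0)
        push_cast at hflip hshift
        rcases hflip with h | ⟨ha, hb⟩ <;> linarith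
    | succ i =>
        have hi : i < n := by omega
        have hsamei := hsame i hi
        have hflip := (letter_flip_pos h2 (θ + (i:ℝ)*α) ((n:ℝ)*α) hfn0 hr).mp hsamei
        rw [show B + ((i+1:ℕ):ℝ)*α = θ + (i:ℝ)*α from by rw [hB]; push_cast; ring] at hmem
        rcases hflip with h | ⟨ha, hb⟩ <;>
          · obtain ⟨hm1, hm2⟩ := hmem
            linarith
  have havoidn : 1 - α < Int.fract ((n:ℝ)*α) → ∀ j : ℕ, j ≤ n →
      (1 - α ≤ Int.fract (B + (j:ℝ)*α) ∧
        Int.fract (B + (j:ℝ)*α) < 1 - α + (1 - Int.fract ((n:ℝ)*α))) → False := by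
    intro hr j hj hmem
    have hδ0 : 0 < 1 - Int.fract ((n:ℝ)*α) := by linarith [Int.fract_lt_one ((n:ℝ)*α)]
    have hδα : 1 - Int.fract ((n:ℝ)*α) < α := by linarith
    cases j with
    | zero =>
        have hmem0 : 1 - α ≤ Int.fract B ∧
            Int.fract B < 1 - α + (1 - Int.fract ((n:ℝ)*α)) := by simpa using hmem
        have hshift := (shift_neg h0 h2 B (1 - Int.fract ((n:ℝ)*α)) hδ0 hδα).mpr hmem0
        rw [show B + α = θ + (0:ℝ)*α from by rw [hB]; ring] at hshift
        have hsame0 := hsame 0 (by omega)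
        have hflip := (letter_flip_neg h0 h2 (θ + ((0:ℕ):ℝ)*α) ((n:ℝ)*α) hr).mp (by
          simpa using hsame0)
        push_cast at hflip hshift
        rcases hflip with ⟨ha, hb⟩ | h <;> linarith
    | succ i =>
        have hi : i < n := by omega
        have hsamei := hsame i hi
        have hflip := (letter_flip_neg h0 h2 (θ + (i:ℝ)*α) ((n:ℝ)*α) hr).mp hsamei
        rw [show B + ((i+1:ℕ):ℝ)*α = θ + (i:ℝ)*α from by rw [hB]; push_cast; ring] at hmem
        obtain ⟨hm1, hm2⟩ := hmem
        rcases hflip with ⟨ha, hb⟩ | h <;> linarith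
  have hhitp : ∀ m : ℕ, 1 ≤ m → m < n → Int.fract ((m:ℝ)*α) < α →
      ∃ j : ℕ, j ≤ n ∧ (1 - α - Int.fract ((m:ℝ)*α) ≤ Int.fract (B + (j:ℝ)*α) ∧
        Int.fract (B + (j:ℝ)*α) < 1 - α) := by
    intro m hm1 hm2 hrm
    have hrm0 : 0 < Int.fract ((m:ℝ)*α) := fract_pos_of_nat hα m hm1
    obtain ⟨i, hi, hne⟩ := hnoret m hm1 hm2
    rw [show θ + ((m+i:ℕ):ℝ)*α = (θ + (i:ℝ)*α) + (m:ℝ)*α from by push_cast; ring] at hne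
    have hflip := letter_flip_pos h2 (θ + (i:ℝ)*α) ((m:ℝ)*α) hrm0 hrm
    have hnreg := (not_congr hflip).mp hne
    push_neg at hnreg
    obtain ⟨hg1, hg2⟩ := hnreg
    rcases lt_or_ge (Int.fract (θ + (i:ℝ)*α)) (1-α) with hlt | hge
    · refine ⟨i+1, by omega, ?_⟩
      rw [show B + ((i+1:ℕ):ℝ)*α = θ + (i:ℝ)*α from by rw [hB]; push_cast; ring]
      exact ⟨hg1, hlt⟩
    · have ht := hg2 hge
      refine ⟨i, by omega, ?_⟩
      refine (shift_pos h0 h2 (B + (i:ℝ)*α) (Int.fract ((m:ℝ)*α)) hrm0 hrm).mp ?_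
      rw [show (B + (i:ℝ)*α) + α = θ + (i:ℝ)*α from by rw [hB]; ring]
      exact ht
  have hhitn : ∀ m : ℕ, 1 ≤ m → m < n → 1 - α < Int.fract ((m:ℝ)*α) →
      ∃ j : ℕ, j ≤ n ∧ (1 - α ≤ Int.fract (B + (j:ℝ)*α) ∧
        Int.fract (B + (j:ℝ)*α) < 1 - α + (1 - Int.fract ((m:ℝ)*α))) := by
    intro m hm1 hm2 hrm
    have hδ0 : 0 < 1 - Int.fract ((m:ℝ)*α) := by linarith [Int.fract_lt_one ((m:ℝ)*α)]
    have hδα : 1 - Int.fract ((m:ℝ)*α) < α := by linarith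
    obtain ⟨i, hi, hne⟩ := hnoret m hm1 hm2
    rw [show θ + ((m+i:ℕ):ℝ)*α = (θ + (i:ℝ)*α) + (m:ℝ)*α from by push_cast; ring] at hne
    have hflip := letter_flip_neg h0 h2 (θ + (i:ℝ)*α) ((m:ℝ)*α) hrm
    have hnreg := (not_congr hflip).mp hne
    push_neg at hnreg
    obtain ⟨hg1, hg2⟩ := hnreg
    rcases lt_or_ge (Int.fract (θ + (i:ℝ)*α)) (1 - Int.fract ((m:ℝ)*α)) with hlt | hge
    · refine ⟨i, by omega, ?_⟩
      refine (shift_neg h0 h2 (B + (i:ℝ)*α) (1 - Int.fract ((m:ℝ)*α)) hδ0 hδα).mp ?_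
      rw [show (B + (i:ℝ)*α) + α = θ + (i:ℝ)*α from by rw [hB]; ring]
      exact hlt
    · have ht := hg1 hge
      refine ⟨i+1, by omega, ?_⟩
      rw [show B + ((i+1:ℕ):ℝ)*α = θ + (i:ℝ)*α from by rw [hB]; push_cast; ring]
      exact ⟨ht, hg2⟩
  refine ⟨hside, ?_⟩
  intro m hm1 hm2
  constructor
  · intro hrn hrm
    by_contra hcon
    push_neg at hcon
    obtain ⟨j, hj, hmem⟩ := hhitp m hm1 hm2 hrm
    exact havoidp hrn j hj ⟨by linarith [hmem.1], hmem.2⟩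
  · intro hrn hrm
    by_contra hcon
    push_neg at hcon
    obtain ⟨j, hj, hmem⟩ := hhitn m hm1 hm2 hrm
    exact havoidn hrn j hj ⟨hmem.1, by linarith [hmem.2]⟩

lemma ls_aux : ∀ (N : ℕ) (u v : List Bool), u.length + v.length ≤ N → u ≠ [] → v ≠ [] →
    u ++ v = v ++ u →
    ∃ (z : List Bool) (a b : ℕ), 1 ≤ a ∧ 1 ≤ b ∧
      u = (List.replicate a z).flatten ∧ v = (List.replicate b z).flatten := by
  intro N
  induction N with
  | zero =>
      intro u v h hu _ _
      exfalso
      have := List.length_pos_iff.mpr hu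
      omega
  | succ N ih =>
      intro u v hN hu hv heq
      rcases le_or_gt u.length v.length with hle | hlt
      · have hpre : u <+: v := by
          have h1 : u <+: v ++ u := ⟨v, heq⟩
          exact List.prefix_of_prefix_length_le h1 (List.prefix_append v u) hle
        obtain ⟨v', rfl⟩ := hpre
        rcases eq_or_ne v' [] with rfl | hv'
        · exact ⟨u, 1, 1, le_rfl, le_rfl, by simp, by simp⟩
        · have heq' : u ++ v' = v' ++ u := by
            have h3 : u ++ (u ++ v') = (u ++ v') ++ u := heq
            rw [List.append_assoc] at h3
            exact List.append_cancel_left h3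
          have hulen := List.length_pos_iff.mpr hu
          obtain ⟨z, a, b, ha, hb, hz1, hz2⟩ := ih u v' (by
            simp only [List.length_append] at hN
            omega) hu hv' heq'
          refine ⟨z, a, a + b, ha, by omega, hz1, ?_⟩
          rw [List.replicate_add]
          have hja : (List.replicate a z ++ List.replicate b z).flatten
              = (List.replicate a z).flatten ++ (List.replicate b z).flatten :=
            List.flatten_append
          rw [hja, ← hz1, ← hz2]
      · have hpre : v <+: u := by
          have h1 : v <+: u ++ v := ⟨u, heq.symm⟩
          exact List.prefix_of_prefix_length_le h1 (List.prefix_append u v) (le_of_lt hlt)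
        obtain ⟨u', rfl⟩ := hpre
        rcases eq_or_ne u' [] with rfl | hu'
        · exact ⟨v, 1, 1, le_rfl, le_rfl, by simp, by simp⟩
        · have heq' : u' ++ v = v ++ u' := by
            have h3 : (v ++ u') ++ v = v ++ (v ++ u') := heq
            rw [List.append_assoc] at h3
            exact List.append_cancel_left h3
          have hvlen := List.length_pos_iff.mpr hv
          obtain ⟨z, a, b, ha, hb, hz1, hz2⟩ := ih u' v (by
            simp only [List.length_append] at hN
            omega) hu' hv heq'
          refine ⟨z, b + a, b, by omega, hb, ?_, hz2⟩
          rw [List.replicate_add]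
          have hja : (List.replicate b z ++ List.replicate a z).flatten
              = (List.replicate b z).flatten ++ (List.replicate a z).flatten :=
            List.flatten_append
          rw [hja, ← hz1, ← hz2]


/-- if `w² ∈ L(α)` with `w` nonempty and primitive, then
`|w| = q₀`, `|w| = q₁`, or `|w| = q_{k,ℓ} = ℓ q_{k-1} + q_{k-2}` for some `k ≥ 2`
and `0 < ℓ ≤ a_k`. -/
theorem square_length (α : ℝ) (hα : Irrational α) (h0 : 0 < α) (h2 : α < 1 / 2)
    (w : List Bool) (hw : w ≠ []) (hprim : Primitive w)
    (hsq : inLang α (w ++ w)) :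
    (w.length : ℤ) = cfQ α 0 ∨ (w.length : ℤ) = cfQ α 1 ∨
      ∃ (k : ℕ) (ℓ : ℤ), 2 ≤ k ∧ 0 < ℓ ∧ ℓ ≤ cfA α k ∧
        (w.length : ℤ) = ℓ * cfQ α (k - 1) + cfQ α (k - 2) := by
  classical
  set n := w.length with hnw
  have hn0 : n ≠ 0 := by
    intro h
    rw [hnw] at h
    exact hw (List.length_eq_zero_iff.mp h)
  rcases eq_or_ne n 1 with hn1 | hn1
  · left
    rw [hn1]
    norm_num [cfQ]
  have hn : 2 ≤ n := by omega
  obtain ⟨x, hx, k₀, hw2⟩ := hsq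
  have hlen2 : (w ++ w).length = 2 * n := by
    simp only [List.length_append, ← hnw]
    omega
  set u : ℕ → Bool := fun j => (w ++ w).getD j false with hu
  set θ : ℝ := x + (k₀:ℝ)*α with hθ
  have hcode : ∀ j : ℕ, j < 2*n → (u j = true ↔ 1 - α ≤ Int.fract (θ + (j:ℝ)*α)) := by
    intro j hj
    have hj' : j < (w ++ w).length := by omega
    have hs := hw2 j hj'
    have hval : u j = sturmian α x (k₀ + j) := hs
    rw [hval]
    unfold sturmian
    rw [show x + ((k₀ + j:ℕ):ℝ)*α = θ + (j:ℝ)*α from by rw [hθ]; push_cast; ring]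
    split_ifs with h
    · simp [h]
    · simp [h]
  have hgetD : ∀ j, j < n → u j = w.getD j false := by
    intro j hj
    exact List.getD_append _ _ _ _ (by omega)
  have hper : ∀ i, i < n → u (n+i) = u i := by
    intro i hi
    have h1 : u (n+i) = w.getD i false := by
      have h2' := List.getD_append_right w w false (n+i) (by omega)
      rw [hu]
      simp only at h2' ⊢
      rw [h2']
      congr 1
      omega
    rw [h1, ← hgetD i hi]
  have hwu : ∀ j, ∀ hj : j < n, w[j]'(by omega) = u j := by
    intro j hj
    rw [hgetD j hj]
    exact (List.getD_eq_getElem w false (by omega)).symm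
  have hnoret : ∀ m : ℕ, 1 ≤ m → m < n →
      ∃ i : ℕ, i < n ∧
        ¬((1-α ≤ Int.fract (θ + ((m+i:ℕ):ℝ)*α)) ↔ (1-α ≤ Int.fract (θ + (i:ℝ)*α))) := by
    intro m hm1 hm2
    by_contra hcon
    push_neg at hcon
    have hui : ∀ i, i < n → u (m+i) = u i := by
      intro i hi
      have hA := hcode (m+i) (by omega)
      have hB := hcode i (by omega)
      have hC := hcon i hi
      cases h6 : u (m+i) <;> cases h7 : u i <;> simp_all
    have hrot : List.drop m w ++ List.take m w = w := by
      apply List.ext_getElem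
      · simp only [List.length_append, List.length_drop, List.length_take]
        omega
      · intro i h₁ h₂
        rw [List.getElem_append]
        have hdl : (List.drop m w).length = n - m := by simp [List.length_drop, hnw]
        split_ifs with hsplit
        · rw [List.getElem_drop]
          have him : m + i < n := by omega
          rw [hwu (m+i) him, hwu i (by omega)]
          exact hui i (by omega)
        · rw [List.getElem_take]
          push_neg at hsplit
          rw [hdl] at hsplit
          simp only [hdl]
          have hi' : i - (n - m) < n := by omega
          rw [hwu _ hi', hwu i (by omega)]
          have h8 := hper (i - (n-m)) (by omega)
          rw [show n + (i - (n-m)) = m + i by omega] at h8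
          have h9 := hui i (by omega)
          rw [h9] at h8
          exact h8.symm
    have htake := List.take_append_drop m w
    have hne1 : List.take m w ≠ [] := by
      intro h
      have := congrArg List.length h
      simp only [List.length_take, List.length] at this
      omega
    have hne2 : List.drop m w ≠ [] := by
      intro h
      have := congrArg List.length h
      simp only [List.length_drop, List.length] at this
      omega
    have hcomm : List.take m w ++ List.drop m w = List.drop m w ++ List.take m w := by
      rw [htake, hrot]
    obtain ⟨z, a, b, ha, hb, hz1, hz2⟩ :=
      ls_aux (2*n) (List.take m w) (List.drop m w) (by
        simp only [List.length_take, List.length_drop]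
        omega) hne1 hne2 hcomm
    have hwj : w = (List.replicate (a+b) z).flatten := by
      rw [List.replicate_add]
      have hja : (List.replicate a z ++ List.replicate b z).flatten
          = (List.replicate a z).flatten ++ (List.replicate b z).flatten :=
        List.flatten_append
      rw [hja, ← hz1, ← hz2, htake]
    have := hprim z (a+b) hwj
    omega
  obtain ⟨hside, hbest⟩ := lemA hα h0 h2 n hn θ u hcode hper hnoret
  exact lemB hα h0 h2 n (by omega) hside hbest
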